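/- Let X: Ω → ℤ₊ be a random variable with binomial moments S_j := E[C(X,j)]. Fix k ∈ ℕ. Then the identity Pr(X = k-1) = Σ_{j=0}^∞ (-1)^j C(j+k-1, k-1) S_{j+k-1} (with convergent series) holds if and only if all S_l are finite and l^{k-1} S_l → 0 as l → ∞. -/

import Mathlib

open MeasureTheory Filter ENNReal

noncomputable def binomMoment {Ω : Type*} [MeasurableSpace Ω] (μ : Measure Ω) (X : Ω → ℕ)
    (j : ℕ) : ℝ≥0∞ :=
  ∫⁻ ω, ((X ω).choose j : ℝ≥0∞) ∂μ

namespace Stmt15Aux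

/-- subset-of-subset identity, valid for all naturals. -/
lemma choose_mul' (x m j : ℕ) :
    x.choose (m + j) * (m + j).choose m = x.choose m * (x - m).choose j := by
  rcases le_or_gt (m + j) x with h | h
  · simpa using Nat.choose_mul (n := x) (Nat.le_add_right m j)
  · rw [Nat.choose_eq_zero_of_lt h, Nat.zero_mul]
    rcases le_or_gt m x with hm | hm
    · rw [Nat.choose_eq_zero_of_lt (show x - m < j by omega), Nat.mul_zero]
    · rw [Nat.choose_eq_zero_of_lt hm, Nat.zero_mul]

/-- remainder term of the truncated inclusion–exclusion identity -/
def rem (m n x : ℕ) : ℕ := if m < x then x.choose m * (x - m - 1).choose (n - 1) else 0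

lemma rem_step (m n x : ℕ) (hn : 1 ≤ n) :
    (m + n).choose m * x.choose (m + n) = rem m (n + 1) x + rem m n x := by
  unfold rem
  rcases lt_or_ge m x with h | h
  · simp only [if_pos h]
    have h1 : (m + n).choose m * x.choose (m + n) = x.choose m * (x - m).choose n := by
      rw [Nat.mul_comm]; exact choose_mul' x m n
    have h2 : x - m = (x - m - 1) + 1 := by omega
    have h3 : n = (n - 1) + 1 := by omega
    rw [h1, h2, h3, Nat.choose_succ_succ']
    simp only [Nat.add_sub_cancel]
    rw [← h3]
    ring
  · simp only [if_neg (not_lt.mpr h)]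
    rw [Nat.choose_eq_zero_of_lt (show x < m + n by omega), Nat.mul_zero]

lemma rem_le (m n x : ℕ) (hn : 1 ≤ n) :
    rem m n x ≤ (m + (n - 1)).choose m * x.choose (m + (n - 1)) := by
  unfold rem
  rcases lt_or_ge m x with h | h
  · simp only [if_pos h]
    calc x.choose m * (x - m - 1).choose (n - 1)
        ≤ x.choose m * (x - m).choose (n - 1) :=
          Nat.mul_le_mul_left _ (Nat.choose_le_choose _ (by omega))
      _ = (m + (n - 1)).choose m * x.choose (m + (n - 1)) := by
          rw [← choose_mul' x m (n - 1)]; ring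
  · rw [if_neg (not_lt.mpr h)]; exact Nat.zero_le _

/-- the key pointwise identity for partial sums -/
lemma key (m : ℕ) : ∀ n, 1 ≤ n → ∀ x : ℕ,
    ∑ j ∈ Finset.range n, (-1 : ℝ) ^ j * ((m + j).choose m) * (x.choose (m + j)) =
      (if x = m then (1 : ℝ) else 0) + (-1) ^ (n - 1) * (rem m n x : ℝ) := by
  refine Nat.le_induction ?_ ?_
  · intro x
    simp only [Finset.sum_range_one, pow_zero, one_mul, Nat.add_zero, Nat.choose_self,
      Nat.cast_one, Nat.sub_self]
    unfold rem
    rcases lt_trichotomy x m with h | h | h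
    · rw [if_neg (by omega), if_neg (by omega), Nat.choose_eq_zero_of_lt h]
      simp
    · subst h
      rw [if_pos rfl, if_neg (lt_irrefl x), Nat.choose_self]
      simp
    · rw [if_neg (by omega), if_pos h]
      simp [Nat.choose_zero_right]
  · intro n hn ih x
    obtain ⟨t, rfl⟩ : ∃ t, n = t + 1 := ⟨n - 1, by omega⟩
    rw [Finset.sum_range_succ, ih x]
    have hstep := rem_step m (t + 1) x hn
    have hcast : ((m + (t + 1)).choose m : ℝ) * (x.choose (m + (t + 1)) : ℝ)
        = (rem m (t + 1 + 1) x : ℝ) + (rem m (t + 1) x : ℝ) := by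
      exact_mod_cast congrArg (Nat.cast : ℕ → ℝ) hstep
    simp only [Nat.add_sub_cancel]
    linear_combination ((-1 : ℝ)) ^ (t + 1) * hcast

/-- `l^m ≤ 2^m · m! · C(l,m)` for `l ≥ 2m` -/
lemma pow_le_const_mul_choose (m l : ℕ) (hl : 2 * m ≤ l) :
    l ^ m ≤ 2 ^ m * (m.factorial * l.choose m) := by
  calc l ^ m ≤ (2 * (l + 1 - m)) ^ m :=
        Nat.pow_le_pow_left (by omega) m
    _ = 2 ^ m * (l + 1 - m) ^ m := by rw [mul_pow]
    _ ≤ 2 ^ m * l.descFactorial m :=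
        Nat.mul_le_mul_left _ (l.pow_sub_le_descFactorial m)
    _ = 2 ^ m * (m.factorial * l.choose m) := by
        rw [Nat.descFactorial_eq_factorial_mul_choose]

end Stmt15Aux

open Stmt15Aux

/-- `Pr(X = k-1) = Σ_j (-1)^j C(j+k-1,k-1) S_{j+k-1}` (with convergent series) holds
iff all `S_l` are finite and `l^(k-1) S_l → 0`. -/
theorem stmt15 {Ω : Type*} [MeasurableSpace Ω] (μ : Measure Ω) [IsProbabilityMeasure μ]
    (X : Ω → ℕ) (hX : Measurable X) (k : ℕ) (hk : 1 ≤ k) :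
    ((∀ l, 1 ≤ l → binomMoment μ X l ≠ ∞) ∧
      Tendsto (fun n => ∑ j ∈ Finset.range n,
          (-1 : ℝ) ^ j * (Nat.choose (j + k - 1) (k - 1)) * (binomMoment μ X (j + k - 1)).toReal)
        atTop (nhds (μ {ω | X ω = k - 1}).toReal)) ↔
    ((∀ l, 1 ≤ l → binomMoment μ X l ≠ ∞) ∧
      Tendsto (fun l : ℕ => (l : ℝ) ^ (k - 1) * (binomMoment μ X l).toReal)
        atTop (nhds 0)) := by
  obtain ⟨m, rfl⟩ : ∃ m, k = m + 1 := ⟨k - 1, by omega⟩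
  have hk1 : m + 1 - 1 = m := by omega
  have hidx : ∀ j : ℕ, j + (m + 1) - 1 = m + j := by omega
  simp only [hk1, hidx]
  -- basic notation
  set S : ℕ → ℝ≥0∞ := binomMoment μ X with hS
  have hS0 : S 0 = 1 := by
    simp [hS, binomMoment, lintegral_one, measure_univ]
  -- all moments finite versions
  constructor
  · rintro ⟨hfin, hT⟩
    refine ⟨hfin, ?_⟩
    have hfin' : ∀ l, S l ≠ ∞ := by
      intro l; rcases Nat.eq_zero_or_pos l with rfl | hl
      · rw [hS0]; exact one_ne_top
      · exact hfin l hl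
    -- terms of the convergent series tend to 0
    have hd : Tendsto (fun n : ℕ =>
        (∑ j ∈ Finset.range (n + 1), (-1 : ℝ) ^ j * ((m + j).choose m) * (S (m + j)).toReal)
        - ∑ j ∈ Finset.range n, (-1 : ℝ) ^ j * ((m + j).choose m) * (S (m + j)).toReal)
        atTop (nhds 0) := by
      have h1 := hT.comp (tendsto_add_atTop_nat 1)
      have := h1.sub hT
      simpa using this
    have hc : Tendsto (fun n : ℕ => ((m + n).choose m : ℝ) * (S (m + n)).toReal)
        atTop (nhds 0) := by
      have habs := hd.abs
      simp only [abs_zero] at habs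
      refine habs.congr fun n => ?_
      rw [Finset.sum_range_succ]
      simp only [add_sub_cancel_left]
      rw [abs_mul, abs_mul, abs_pow, abs_neg, abs_one, one_pow, one_mul,
        Nat.abs_cast, abs_of_nonneg ENNReal.toReal_nonneg]
    -- squeeze
    have hcomp : Tendsto (fun l : ℕ => ((2 : ℝ) ^ m * m.factorial) *
        (((m + (l - m)).choose m : ℝ) * (S (m + (l - m))).toReal)) atTop (nhds 0) := by
      have := (hc.comp (tendsto_sub_atTop_nat m)).const_mul ((2 : ℝ) ^ m * m.factorial)
      simpa using this
    refine squeeze_zero' ?_ ?_ hcomp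
    · filter_upwards with l
      positivity
    · filter_upwards [eventually_ge_atTop (2 * m)] with l hl
      have hml : m + (l - m) = l := by omega
      rw [hml]
      have hnat := pow_le_const_mul_choose m l hl
      have hcast : (l : ℝ) ^ m ≤ (2 : ℝ) ^ m * m.factorial * (l.choose m : ℝ) := by
        exact_mod_cast hnat.trans_eq (by ring)
      calc (l : ℝ) ^ m * (S l).toReal
          ≤ ((2 : ℝ) ^ m * m.factorial * (l.choose m : ℝ)) * (S l).toReal :=
            mul_le_mul_of_nonneg_right hcast ENNReal.toReal_nonneg
        _ = (2 : ℝ) ^ m * m.factorial * ((l.choose m : ℝ) * (S l).toReal) := by ring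
  · rintro ⟨hfin, h0⟩
    refine ⟨hfin, ?_⟩
    have hfin' : ∀ l, S l ≠ ∞ := by
      intro l; rcases Nat.eq_zero_or_pos l with rfl | hl
      · rw [hS0]; exact one_ne_top
      · exact hfin l hl
    -- integrability of binomial coefficients
    have hmeasE : ∀ l, Measurable fun ω => (((X ω).choose l : ℕ) : ℝ≥0∞) :=
      fun l => (measurable_from_nat (f := fun n : ℕ => ((n.choose l : ℕ) : ℝ≥0∞))).comp hX
    have hint : ∀ l, Integrable (fun ω => ((X ω).choose l : ℝ)) μ := by
      intro l
      have := integrable_toReal_of_lintegral_ne_top (hmeasE l).aemeasurable (hfin' l)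
      simpa using this
    have hIeq : ∀ l, ∫ ω, ((X ω).choose l : ℝ) ∂μ = (S l).toReal := by
      intro l
      have := integral_toReal (μ := μ) (hmeasE l).aemeasurable
        (Filter.Eventually.of_forall fun ω => (natCast_lt_top _ : (((X ω).choose l : ℕ) : ℝ≥0∞) < ∞))
      simpa [hS, binomMoment] using this
    -- remainder integrand
    have hmeasR : ∀ n, Measurable fun ω => ((rem m n (X ω) : ℕ) : ℝ≥0∞) :=
      fun n => (measurable_from_nat (f := fun x : ℕ => ((rem m n x : ℕ) : ℝ≥0∞))).comp hX
    set R : ℕ → ℝ≥0∞ := fun n => ∫⁻ ω, ((rem m n (X ω) : ℕ) : ℝ≥0∞) ∂μ with hRdef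
    have hRle : ∀ n, 1 ≤ n → R n ≤ ((m + (n - 1)).choose m : ℝ≥0∞) * S (m + (n - 1)) := by
      intro n hn
      calc R n ≤ ∫⁻ ω, ((m + (n - 1)).choose m : ℝ≥0∞) *
            (((X ω).choose (m + (n - 1)) : ℕ) : ℝ≥0∞) ∂μ := by
            refine lintegral_mono fun ω => ?_
            have := rem_le m n (X ω) hn
            calc ((rem m n (X ω) : ℕ) : ℝ≥0∞)
                ≤ (((m + (n - 1)).choose m * (X ω).choose (m + (n - 1)) : ℕ) : ℝ≥0∞) := by
                  exact_mod_cast Nat.cast_le.mpr this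
              _ = _ := by push_cast; ring
        _ = ((m + (n - 1)).choose m : ℝ≥0∞) * S (m + (n - 1)) := by
            rw [lintegral_const_mul _ (hmeasE (m + (n - 1)))]; rfl
    have hRfin : ∀ n, 1 ≤ n → R n ≠ ∞ := by
      intro n hn
      exact ne_top_of_le_ne_top (by
        exact ENNReal.mul_ne_top (natCast_ne_top _) (hfin' _)) (hRle n hn)
    have hintR : ∀ n, 1 ≤ n → Integrable (fun ω => (rem m n (X ω) : ℝ)) μ := by
      intro n hn
      have := integrable_toReal_of_lintegral_ne_top (hmeasR n).aemeasurable (hRfin n hn)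
      simpa using this
    have hIReq : ∀ n, ∫ ω, (rem m n (X ω) : ℝ) ∂μ = (R n).toReal := by
      intro n
      have := integral_toReal (μ := μ) (hmeasR n).aemeasurable
        (Filter.Eventually.of_forall fun ω => (natCast_lt_top _ : ((rem m n (X ω) : ℕ) : ℝ≥0∞) < ∞))
      simpa using this
    -- indicator
    set A : Set Ω := {ω | X ω = m} with hA
    have hAmeas : MeasurableSet A := hX (measurableSet_singleton m)
    have hindint : Integrable (fun ω => if X ω = m then (1 : ℝ) else 0) μ := by
      have : (fun ω => if X ω = m then (1 : ℝ) else 0) = A.indicator (fun _ => 1) := by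
        funext ω; simp [Set.indicator_apply, hA]
      rw [this]
      exact (integrable_const 1).indicator hAmeas
    have hindeq : ∫ ω, (if X ω = m then (1 : ℝ) else 0) ∂μ = (μ A).toReal := by
      have : (fun ω => if X ω = m then (1 : ℝ) else 0) = A.indicator (fun _ => (1 : ℝ)) := by
        funext ω; simp [Set.indicator_apply, hA]
      rw [this]
      simp [integral_indicator_const, hAmeas, Measure.real]
    -- the partial sum identity
    have hTn : ∀ n, 1 ≤ n →
        (∑ j ∈ Finset.range n, (-1 : ℝ) ^ j * ((m + j).choose m) * (S (m + j)).toReal)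
          = (μ A).toReal + (-1 : ℝ) ^ (n - 1) * (R n).toReal := by
      intro n hn
      have hsum : ∑ j ∈ Finset.range n, (-1 : ℝ) ^ j * ((m + j).choose m) * (S (m + j)).toReal
          = ∫ ω, (∑ j ∈ Finset.range n,
              (-1 : ℝ) ^ j * ((m + j).choose m) * ((X ω).choose (m + j) : ℝ)) ∂μ := by
        rw [integral_finset_sum]
        · refine Finset.sum_congr rfl fun j _ => ?_
          rw [integral_const_mul, hIeq]
        · intro j _
          exact ((hint (m + j)).const_mul _)
      rw [hsum]
      have hpt : ∀ ω, (∑ j ∈ Finset.range n,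
          (-1 : ℝ) ^ j * ((m + j).choose m) * ((X ω).choose (m + j) : ℝ))
          = (if X ω = m then (1 : ℝ) else 0) + (-1) ^ (n - 1) * (rem m n (X ω) : ℝ) :=
        fun ω => key m n hn (X ω)
      simp_rw [hpt]
      rw [integral_add hindint ((hintR n hn).const_mul _), hindeq, integral_const_mul, hIReq]
    -- squeeze to the limit
    rw [← tendsto_sub_nhds_zero_iff]
    have hbound : Tendsto (fun n : ℕ =>
        ((m + (n - 1) : ℕ) : ℝ) ^ m * (S (m + (n - 1))).toReal) atTop (nhds 0) := by
      have h1 : Tendsto (fun n : ℕ => m + (n - 1)) atTop atTop :=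
        tendsto_atTop_mono (fun n => Nat.le_add_left _ _) (tendsto_sub_atTop_nat 1)
      exact h0.comp h1
    refine squeeze_zero_norm' ?_ hbound
    filter_upwards [eventually_ge_atTop 1] with n hn
    rw [hTn n hn]
    simp only [add_sub_cancel_left]
    rw [norm_mul, norm_pow, norm_neg, norm_one, one_pow, one_mul,
      Real.norm_eq_abs, abs_of_nonneg ENNReal.toReal_nonneg]
    have hle1 : (R n).toReal ≤ (((m + (n - 1)).choose m : ℝ≥0∞) * S (m + (n - 1))).toReal :=
      ENNReal.toReal_mono (ENNReal.mul_ne_top (natCast_ne_top _) (hfin' _)) (hRle n hn)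
    refine hle1.trans ?_
    rw [ENNReal.toReal_mul]
    simp only [ENNReal.toReal_natCast]
    refine mul_le_mul_of_nonneg_right ?_ ENNReal.toReal_nonneg
    exact_mod_cast Nat.choose_le_pow (m + (n - 1)) m
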